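/- Let λ be an atomless Borel probability measure on [0,1]. Define g_λ(x) = λ([0,x]), let G_p(t) = t(t + 2p(1−t)), let h(t) = 2q·t + 2p·(1−t), and for i ≥ 1 let g_λ^{(i)}(x) = G_p^{i−1}(g_λ(x)) (the (i−1)-fold iterate of G_p applied to g_λ(x)). Then for every n ≥ 1 and every Borel set A ⊆ [0,1], (V^n λ)(A) = ∫_A ∏_{i=1}^n h(g_λ^{(i)}(x)) dλ(x); that is, the Radon–Nikodym density of V^n λ with respect to λ is f_λ^{(n)}(x) = ∏_{i=1}^n h(g_λ^{(i)}(x)). -/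

import Mathlib

open MeasureTheory Set Filter Topology ENNReal

/-- The unit interval `[0,1]` as a measurable space (with the Borel σ-algebra). -/
abbrev UnitInt : Type := ↥(Set.Icc (0:ℝ) 1)

/-- The family of measures `P(x,y,·)`: `p·δ_x + q·δ_y` if `x < y`, `δ_x` if `x = y`,
and `p·δ_y + q·δ_x` if `x > y`. -/
noncomputable def Pker (p q : ℝ) (x y : UnitInt) : Measure UnitInt :=
  if x < y then ENNReal.ofReal p • Measure.dirac x + ENNReal.ofReal q • Measure.dirac y
  else if y < x then ENNReal.ofReal p • Measure.dirac y + ENNReal.ofReal q • Measure.dirac x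
  else Measure.dirac x
/-- G_p(t) = t(t + 2p(1−t)). -/
noncomputable def Gp (p : ℝ) (t : ℝ) : ℝ := t * (t + 2*p*(1 - t))

/-- h(t) = 2q·t + 2p·(1−t). -/
noncomputable def hFun (p q : ℝ) (t : ℝ) : ℝ := 2*q*t + 2*p*(1 - t)

set_option linter.unusedSectionVars false
set_option linter.unusedVariables false
set_option maxHeartbeats 1000000

lemma Gp_hasDerivAt (p q : ℝ) (hpq : p + q = 1) (t : ℝ) :
    HasDerivAt (Gp p) (hFun p q t) t := by
  have h : Gp p = fun t : ℝ => (1 - 2*p) * t^2 + 2*p*t := by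
    funext t; simp only [Gp]; ring
  rw [h]
  have h2 : HasDerivAt (fun t : ℝ => (1-2*p)*t^2 + 2*p*t)
      ((1-2*p)*(2*t^1) + 2*p*1) t :=
    (((hasDerivAt_pow 2 t).const_mul (1-2*p)).add ((hasDerivAt_id t).const_mul (2*p)))
  have hq : q = 1 - p := by linarith
  convert h2 using 1
  simp only [hFun, hq]; ring

lemma Gp_continuous (p : ℝ) : Continuous (Gp p) := by
  unfold Gp; fun_prop

lemma hFun_continuous (p q : ℝ) : Continuous (hFun p q) := by
  unfold hFun; fun_prop

lemma Gp_iterate_hasDerivAt (p q : ℝ) (hpq : p + q = 1) (k : ℕ) (t : ℝ) :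
    HasDerivAt ((Gp p)^[k]) (∏ i ∈ Finset.range k, hFun p q ((Gp p)^[i] t)) t := by
  induction k with
  | zero => simpa using hasDerivAt_id t
  | succ k ih =>
      rw [Function.iterate_succ']
      have h := (Gp_hasDerivAt p q hpq ((Gp p)^[k] t)).comp t ih
      rw [Finset.prod_range_succ]
      rw [mul_comm]; exact h

lemma Fk_continuous (p q : ℝ) (k : ℕ) :
    Continuous (fun u => ∏ i ∈ Finset.range k, hFun p q ((Gp p)^[i] u)) := by
  apply continuous_finset_prod
  intro i _
  exact (hFun_continuous p q).comp ((Gp_continuous p).iterate i)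

lemma Gp_iterate_zero (p : ℝ) (k : ℕ) : (Gp p)^[k] 0 = 0 := by
  apply Function.iterate_fixed
  simp [Gp]

lemma Gp_iterate_one (p : ℝ) (k : ℕ) : (Gp p)^[k] 1 = 1 := by
  apply Function.iterate_fixed
  simp [Gp]

lemma integral_Fk (p q : ℝ) (hpq : p + q = 1) (k : ℕ) (s : ℝ) :
    ∫ u in (0:ℝ)..s, (∏ i ∈ Finset.range k, hFun p q ((Gp p)^[i] u)) = (Gp p)^[k] s := by
  have h := intervalIntegral.integral_eq_sub_of_hasDerivAt
    (f := (Gp p)^[k]) (fun u _ => Gp_iterate_hasDerivAt p q hpq k u)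
    ((Fk_continuous p q k).intervalIntegrable 0 s)
  rw [h, Gp_iterate_zero, sub_zero]

lemma Gp_mem (p : ℝ) (hp : 0 ≤ p) (hp1 : p ≤ 1) {t : ℝ} (ht : t ∈ Icc (0:ℝ) 1) :
    Gp p t ∈ Icc (0:ℝ) 1 := by
  obtain ⟨h0, h1⟩ := ht
  constructor
  · unfold Gp
    have : 0 ≤ t + 2*p*(1-t) := by nlinarith
    exact mul_nonneg h0 this
  · unfold Gp
    nlinarith [sq_nonneg (1-t), mul_nonneg (mul_nonneg hp h0) (sub_nonneg.2 h1),
      mul_nonneg (mul_nonneg (sub_nonneg.2 hp1) h0) (sub_nonneg.2 h1)]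

lemma Gp_iterate_mem (p : ℝ) (hp : 0 ≤ p) (hp1 : p ≤ 1) (k : ℕ) {t : ℝ}
    (ht : t ∈ Icc (0:ℝ) 1) : (Gp p)^[k] t ∈ Icc (0:ℝ) 1 := by
  induction k with
  | zero => simpa using ht
  | succ k ih => rw [Function.iterate_succ']; exact Gp_mem p hp hp1 ih

lemma hFun_nonneg (p q : ℝ) (hp : 0 ≤ p) (hq : 0 ≤ q) {t : ℝ} (ht : t ∈ Icc (0:ℝ) 1) :
    0 ≤ hFun p q t := by
  obtain ⟨h0, h1⟩ := ht
  unfold hFun; nlinarith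

lemma Fk_nonneg (p q : ℝ) (hp : 0 ≤ p) (hq : 0 ≤ q) (hpq : p + q = 1) (k : ℕ) {t : ℝ}
    (ht : t ∈ Icc (0:ℝ) 1) :
    0 ≤ ∏ i ∈ Finset.range k, hFun p q ((Gp p)^[i] t) := by
  apply Finset.prod_nonneg
  intro i _
  exact hFun_nonneg p q hp hq (Gp_iterate_mem p hp (by linarith) i ht)

section CDF
variable (m : Measure ℝ) [IsProbabilityMeasure m] [NullSingletonClass m]

lemma cdf_mono : Monotone (fun t => (m (Iic t)).toReal) := fun a b hab =>
  ENNReal.toReal_mono (measure_ne_top m _) (measure_mono (Iic_subset_Iic.2 hab))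

lemma cdf_le_one' (t : ℝ) : (m (Iic t)).toReal ≤ 1 := by
  have h : m (Iic t) ≤ 1 := prob_le_one
  calc (m (Iic t)).toReal ≤ (1 : ℝ≥0∞).toReal := ENNReal.toReal_mono one_ne_top h
    _ = 1 := by simp

lemma cdf_ofReal (t : ℝ) : m (Iic t) = ENNReal.ofReal ((m (Iic t)).toReal) :=
  (ENNReal.ofReal_toReal (measure_ne_top m _)).symm

variable (hsupp : m ((Icc (0:ℝ) 1)ᶜ) = 0)
include hsupp

lemma cdf_neg {t : ℝ} (ht : t < 0) : m (Iic t) = 0 := by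
  refine measure_mono_null (fun x hx => ?_) hsupp
  simp only [mem_Iic] at hx
  simp only [mem_compl_iff, mem_Icc, not_and, not_le]
  intro h0; linarith

lemma cdf_ge_one {t : ℝ} (ht : 1 ≤ t) : m (Iic t) = 1 := by
  refine le_antisymm prob_le_one ?_
  have huniv : (univ : Set ℝ) ⊆ Iic t ∪ (Icc (0:ℝ) 1)ᶜ := by
    intro x _
    by_cases hx : x ≤ t
    · exact Or.inl hx
    · right
      simp only [mem_compl_iff, mem_Icc, not_and, not_le]
      intro h0; push_neg at hx; linarith
  have hmm := measure_mono (μ := m) huniv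
  rw [measure_univ] at hmm
  calc (1:ℝ≥0∞) ≤ m (Iic t ∪ (Icc (0:ℝ) 1)ᶜ) := hmm
    _ ≤ m (Iic t) + m ((Icc (0:ℝ) 1)ᶜ) := measure_union_le _ _
    _ = m (Iic t) := by rw [hsupp, add_zero]

lemma cdf_level {a : ℝ} (ha : a ∈ Icc (0:ℝ) 1) :
    m {t : ℝ | (m (Iic t)).toReal ≤ a} = ENNReal.ofReal a := by
  set F := fun t : ℝ => (m (Iic t)).toReal with hF
  rcases eq_or_lt_of_le ha.2 with h1 | h1
  · have : {t : ℝ | F t ≤ a} = univ := eq_univ_of_forall fun t => by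
      simpa [h1] using cdf_le_one' m t
    rw [this, measure_univ, h1, ENNReal.ofReal_one]
  -- now a < 1
  have hS : ∀ t ∈ {t : ℝ | F t ≤ a}, t ≤ 1 := by
    intro t ht
    by_contra hc
    push_neg at hc
    have : F t = 1 := by
      simp only [hF]; rw [cdf_ge_one m hsupp hc.le]; simp
    simp only [mem_setOf_eq, this] at ht
    linarith
  have hne : ({t : ℝ | F t ≤ a}).Nonempty := by
    refine ⟨-1, ?_⟩
    simp only [mem_setOf_eq, hF]
    rw [cdf_neg m hsupp (by norm_num : (-1:ℝ) < 0)]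
    simpa using ha.1
  have hbdd : BddAbove {t : ℝ | F t ≤ a} := ⟨1, hS⟩
  set c := sSup {t : ℝ | F t ≤ a} with hc
  have hlt : ∀ y, y < c → F y ≤ a := by
    intro y hy
    obtain ⟨t, htS, hyt⟩ := exists_lt_of_lt_csSup hne hy
    exact le_trans (cdf_mono m hyt.le) htS
  have hiio : Iio c = ⋃ n : ℕ, Iic (c - 1/(n+1)) := by
    ext y
    simp only [mem_Iio, mem_iUnion, mem_Iic]
    constructor
    · intro h
      obtain ⟨n, hn⟩ := exists_nat_one_div_lt (sub_pos.2 h)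
      exact ⟨n, by push_cast at hn ⊢; linarith⟩
    · rintro ⟨n, hn⟩
      have : (0:ℝ) < 1/(n+1) := by positivity
      linarith
  have hIio : m (Iio c) ≤ ENNReal.ofReal a := by
    rw [hiio]
    have hdir : Directed (· ⊆ ·) (fun n : ℕ => Iic (c - 1/(n+1))) := by
      apply Monotone.directed_le
      intro i j hij
      apply Iic_subset_Iic.2
      have : (1:ℝ)/(j+1) ≤ 1/(i+1) := by
        apply one_div_le_one_div_of_le (by positivity)
        push_cast; linarith [(Nat.cast_le (α := ℝ)).2 hij]
      linarith
    rw [hdir.measure_iUnion]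
    apply iSup_le
    intro n
    rw [cdf_ofReal m]
    apply ENNReal.ofReal_le_ofReal
    apply hlt
    have : (0:ℝ) < 1/(n+1) := by positivity
    linarith
  have hFc_le : F c ≤ a := by
    have heq : m (Iic c) = m (Iio c) := (measure_congr (Iio_ae_eq_Iic (a := c))).symm
    simp only [hF]
    rw [heq]
    calc (m (Iio c)).toReal ≤ (ENNReal.ofReal a).toReal :=
          ENNReal.toReal_mono ENNReal.ofReal_ne_top hIio
      _ = a := ENNReal.toReal_ofReal ha.1
  have hSc : {t : ℝ | F t ≤ a} = Iic c := by
    ext t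
    constructor
    · exact fun ht => le_csSup hbdd ht
    · exact fun ht => le_trans (cdf_mono m ht) hFc_le
  have hFc_ge : a ≤ F c := by
    by_contra hcon
    push_neg at hcon
    have ha0 : 0 < a := lt_of_le_of_lt ENNReal.toReal_nonneg hcon
    have hinter : ⋂ n : ℕ, Iic (c + 1/(n+1)) = Iic c := by
      ext t
      simp only [mem_iInter, mem_Iic]
      constructor
      · intro h
        by_contra hct
        push_neg at hct
        obtain ⟨n, hn⟩ := exists_nat_one_div_lt (sub_pos.2 hct)
        have := h n
        push_cast at hn this; linarith
      · intro h n
        have : (0:ℝ) < 1/(n+1) := by positivity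
        linarith
    have hanti : Antitone (fun n : ℕ => Iic (c + 1/(n+1))) := by
      intro i j hij
      apply Iic_subset_Iic.2
      have : (1:ℝ)/(j+1) ≤ 1/(i+1) := by
        apply one_div_le_one_div_of_le (by positivity)
        push_cast; linarith [(Nat.cast_le (α := ℝ)).2 hij]
      linarith
    have htend : Tendsto (fun n : ℕ => m (Iic (c + 1/(n+1)))) atTop (𝓝 (m (Iic c))) := by
      have := tendsto_measure_iInter_atTop (μ := m) (s := fun n : ℕ => Iic (c + 1/(n+1)))
        (fun n => measurableSet_Iic.nullMeasurableSet) hanti ⟨0, measure_ne_top m _⟩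
      rwa [hinter] at this
    have hlim : m (Iic c) < ENNReal.ofReal a := by
      rw [cdf_ofReal m]
      exact ENNReal.ofReal_lt_ofReal_iff ha0 |>.2 hcon
    have hev := htend.eventually_lt_const hlim
    obtain ⟨n, hn⟩ := hev.exists
    have hFn : F (c + 1/(n+1)) ≤ a := by
      simp only [hF]
      calc (m (Iic (c + 1/(n+1)))).toReal ≤ (ENNReal.ofReal a).toReal :=
            ENNReal.toReal_mono ENNReal.ofReal_ne_top hn.le
        _ = a := ENNReal.toReal_ofReal ha.1
    have : c + 1/(n+1) ≤ c := le_csSup hbdd hFn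
    have h0 : (0:ℝ) < 1/(n+1) := by positivity
    linarith
  have hFca : F c = a := le_antisymm hFc_le hFc_ge
  rw [hSc, cdf_ofReal m]
  show ENNReal.ofReal (F c) = _
  rw [hFca]

lemma cdf_map_eq :
    m.map (fun t => (m (Iic t)).toReal) = volume.restrict (Icc (0:ℝ) 1) := by
  have hmeas : Measurable (fun t : ℝ => (m (Iic t)).toReal) := (cdf_mono m).measurable
  have : IsProbabilityMeasure (m.map (fun t => (m (Iic t)).toReal)) :=
    Measure.isProbabilityMeasure_map hmeas.aemeasurable
  apply Measure.ext_of_Iic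
  intro a
  rw [Measure.map_apply hmeas measurableSet_Iic,
    Measure.restrict_apply measurableSet_Iic]
  have hpre : (fun t : ℝ => (m (Iic t)).toReal) ⁻¹' Iic a = {t : ℝ | (m (Iic t)).toReal ≤ a} := rfl
  rw [hpre]
  rcases lt_or_ge a 0 with ha | ha
  · have h1 : {t : ℝ | (m (Iic t)).toReal ≤ a} = ∅ := by
      ext t; simp only [mem_setOf_eq, mem_empty_iff_false, iff_false, not_le]
      exact lt_of_lt_of_le ha ENNReal.toReal_nonneg
    have h2 : Iic a ∩ Icc (0:ℝ) 1 = ∅ := by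
      ext x; simp only [mem_inter_iff, mem_Iic, mem_Icc, mem_empty_iff_false, iff_false]
      rintro ⟨hx, h0, -⟩; linarith
    rw [h1, h2]; simp
  rcases le_or_gt a 1 with ha1 | ha1
  · rw [cdf_level m hsupp ⟨ha, ha1⟩]
    have h2 : Iic a ∩ Icc (0:ℝ) 1 = Icc 0 a := by
      ext x
      simp only [mem_inter_iff, mem_Iic, mem_Icc]
      constructor
      · rintro ⟨h1, h2, h3⟩; exact ⟨h2, h1⟩
      · rintro ⟨h1, h2⟩; exact ⟨h2, h1, le_trans h2 ha1⟩
    rw [h2, Real.volume_Icc]; norm_num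
  · have h1 : {t : ℝ | (m (Iic t)).toReal ≤ a} = univ :=
      eq_univ_of_forall fun t => le_trans (cdf_le_one' m t) ha1.le
    have h2 : Iic a ∩ Icc (0:ℝ) 1 = Icc 0 1 := by
      ext x
      simp only [mem_inter_iff, mem_Iic, mem_Icc]
      exact ⟨fun h => h.2, fun h => ⟨le_trans h.2 ha1.le, h⟩⟩
    rw [h1, h2, Real.volume_Icc, measure_univ]; norm_num
end CDF


section Transfer
variable (lam : Measure UnitInt) [IsProbabilityMeasure lam] [NullSingletonClass lam]

/-- The pushforward of `lam` to `ℝ`. -/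
noncomputable def lamR (lam : Measure UnitInt) : Measure ℝ := lam.map Subtype.val

instance : IsProbabilityMeasure (lamR lam) :=
  Measure.isProbabilityMeasure_map measurable_subtype_coe.aemeasurable

instance : NullSingletonClass (lamR lam) := by
  constructor
  intro x
  rw [lamR, Measure.map_apply measurable_subtype_coe (measurableSet_singleton x)]
  have hsub : (Subtype.val ⁻¹' {x} : Set UnitInt).Subsingleton :=
    (subsingleton_singleton (a := x)).preimage Subtype.val_injective
  exact hsub.measure_zero lam

lemma lamR_supp : lamR lam ((Icc (0:ℝ) 1)ᶜ) = 0 := by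
  rw [lamR, Measure.map_apply measurable_subtype_coe (measurableSet_Icc.compl)]
  have : (Subtype.val ⁻¹' (Icc (0:ℝ) 1)ᶜ : Set UnitInt) = ∅ := by
    ext y
    simp only [mem_preimage, mem_compl_iff, mem_empty_iff_false, iff_false, not_not]
    exact y.2
  rw [this, measure_empty]

lemma lamR_Iic (x : UnitInt) : lamR lam (Iic (x : ℝ)) = lam (Iic x) := by
  rw [lamR, Measure.map_apply measurable_subtype_coe measurableSet_Iic]
  congr 1

lemma g_measurable : Measurable (fun x : UnitInt => (lam (Iic x)).toReal) := by
  have h1 : Monotone (fun t : ℝ => (lamR lam (Iic t)).toReal) := fun a b hab =>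
    ENNReal.toReal_mono (measure_ne_top _ _) (measure_mono (Iic_subset_Iic.2 hab))
  have : (fun x : UnitInt => (lam (Iic x)).toReal)
      = (fun t : ℝ => (lamR lam (Iic t)).toReal) ∘ Subtype.val := by
    funext x; simp only [Function.comp_apply, lamR_Iic]
  rw [this]
  exact h1.measurable.comp measurable_subtype_coe

lemma g_mem (x : UnitInt) : (lam (Iic x)).toReal ∈ Icc (0:ℝ) 1 := by
  constructor
  · exact ENNReal.toReal_nonneg
  · calc (lam (Iic x)).toReal ≤ (1:ℝ≥0∞).toReal :=
        ENNReal.toReal_mono one_ne_top prob_le_one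
      _ = 1 := by simp

lemma lam_Iic_ofReal (x : UnitInt) :
    lam (Iic x) = ENNReal.ofReal ((lam (Iic x)).toReal) :=
  (ENNReal.ofReal_toReal (measure_ne_top _ _)).symm


noncomputable def cdfR (lam : Measure UnitInt) : ℝ → ℝ := fun t => (lamR lam (Iic t)).toReal

lemma cdfR_val (t : UnitInt) :
    cdfR lam (t : ℝ) = (lam (Iic t)).toReal := by
  rw [cdfR, lamR_Iic]

lemma cdfR_mono : Monotone (cdfR lam) := fun a b hab =>
  ENNReal.toReal_mono (measure_ne_top _ _) (measure_mono (Iic_subset_Iic.2 hab))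

lemma cdfR_measurable : Measurable (cdfR lam) :=
  (cdfR_mono lam).measurable

lemma transfer (φ : ℝ → ℝ) (hφ : Continuous φ) (hφ0 : ∀ u ∈ Icc (0:ℝ) 1, 0 ≤ φ u) (x : UnitInt) :
    ∫⁻ t in Iic x, ENNReal.ofReal (φ ((lam (Iic t)).toReal)) ∂lam
      = ENNReal.ofReal (∫ u in (0:ℝ)..((lam (Iic x)).toReal), φ u) := by
  have hs : (lam (Iic x)).toReal ∈ Icc (0:ℝ) 1 := g_mem lam x
  set s := (lam (Iic x)).toReal with hsdef
  have hFx : cdfR lam (x : ℝ) = s := cdfR_val lam x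
  have hFmeas : Measurable (cdfR lam) := cdfR_measurable lam
  have hFvalmeas : Measurable (fun t : UnitInt => cdfR lam (t : ℝ)) :=
    hFmeas.comp measurable_subtype_coe
  have hφmeas : Measurable (fun u : ℝ => ENNReal.ofReal (φ u)) :=
    ENNReal.measurable_ofReal.comp hφ.measurable
  set E : Set UnitInt := (fun t : UnitInt => cdfR lam (t : ℝ)) ⁻¹' (Iic s) with hEdef
  have hsub : Iic x ⊆ E := by
    intro t ht
    show cdfR lam (t:ℝ) ≤ s
    rw [← hFx]
    exact cdfR_mono lam (Subtype.coe_le_coe.2 ht)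
  have hlamE : lam E = ENNReal.ofReal s := by
    have h1 : E = Subtype.val ⁻¹' (cdfR lam ⁻¹' Iic s) := rfl
    have h2 : lam.map Subtype.val = lamR lam := rfl
    rw [h1, ← Measure.map_apply measurable_subtype_coe (hFmeas measurableSet_Iic), h2]
    have h3 : cdfR lam ⁻¹' Iic s = {t : ℝ | (lamR lam (Iic t)).toReal ≤ s} := rfl
    rw [h3]
    exact cdf_level (lamR lam) (lamR_supp lam) hs
  have hlamIic : lam (Iic x) = ENNReal.ofReal s := lam_Iic_ofReal lam x
  have hnull : lam (E \ Iic x) = 0 := by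
    rw [measure_diff hsub measurableSet_Iic.nullMeasurableSet (measure_ne_top _ _),
      hlamE, hlamIic, tsub_self]
  have haeeq : (Iic x : Set UnitInt) =ᵐ[lam] E :=
    (MeasureTheory.ae_eq_set).2 ⟨by rw [diff_eq_empty.2 hsub]; exact measure_empty, hnull⟩
  calc ∫⁻ t in Iic x, ENNReal.ofReal (φ ((lam (Iic t)).toReal)) ∂lam
      = ∫⁻ t in E, ENNReal.ofReal (φ (cdfR lam (t:ℝ))) ∂lam := by
        rw [Measure.restrict_congr_set haeeq]
        apply lintegral_congr
        intro t
        rw [cdfR_val]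
    _ = ∫⁻ u in Iic s, ENNReal.ofReal (φ u) ∂(lam.map (fun t : UnitInt => cdfR lam (t:ℝ))) := by
        rw [setLIntegral_map measurableSet_Iic hφmeas hFvalmeas]
    _ = ∫⁻ u in Iic s, ENNReal.ofReal (φ u) ∂(volume.restrict (Icc (0:ℝ) 1)) := by
        have hcomp : lam.map (fun t : UnitInt => cdfR lam (t:ℝ)) = (lamR lam).map (cdfR lam) := by
          rw [lamR, Measure.map_map hFmeas measurable_subtype_coe]
          rfl
        have heq : (lamR lam).map (cdfR lam) = volume.restrict (Icc (0:ℝ) 1) :=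
          cdf_map_eq (lamR lam) (lamR_supp lam)
        rw [hcomp, heq]
    _ = ∫⁻ u in Icc (0:ℝ) s, ENNReal.ofReal (φ u) ∂volume := by
        rw [Measure.restrict_restrict measurableSet_Iic]
        have hset : Iic s ∩ Icc (0:ℝ) 1 = Icc 0 s := by
          ext u
          simp only [mem_inter_iff, mem_Iic, mem_Icc]
          exact ⟨fun h => ⟨h.2.1, h.1⟩, fun h => ⟨h.2, h.1, le_trans h.2 hs.2⟩⟩
        rw [hset]
    _ = ENNReal.ofReal (∫ u in Icc (0:ℝ) s, φ u) := by
        rw [← ofReal_integral_eq_lintegral_ofReal]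
        · exact hφ.integrableOn_Icc
        · rw [EventuallyLE, ae_restrict_iff' measurableSet_Icc]
          apply Filter.Eventually.of_forall
          intro u hu
          exact hφ0 u ⟨hu.1, le_trans hu.2 hs.2⟩
    _ = ENNReal.ofReal (∫ u in (0:ℝ)..s, φ u) := by
        rw [intervalIntegral.integral_of_le hs.1, ← integral_Icc_eq_integral_Ioc]

lemma Vstep (p q : ℝ) (μ : Measure UnitInt) [IsFiniteMeasure μ] [NullSingletonClass μ]
    {A : Set UnitInt} (hA : MeasurableSet A) :
    ∫⁻ x, ∫⁻ y, Pker p q x y A ∂μ ∂μ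
      = ∫⁻ x in A, (2 * ENNReal.ofReal p * μ (Ioi x) + 2 * ENNReal.ofReal q * μ (Iio x)) ∂μ := by
  set χ : UnitInt → ℝ≥0∞ := A.indicator 1 with hχdef
  have hχ : Measurable χ := measurable_one.indicator hA
  have hslt : MeasurableSet {z : UnitInt × UnitInt | z.2 < z.1} :=
    measurableSet_lt measurable_snd measurable_fst
  have hsgt : MeasurableSet {z : UnitInt × UnitInt | z.1 < z.2} :=
    measurableSet_lt measurable_fst measurable_snd
  have hs₁ : MeasurableSet {z : UnitInt × UnitInt | z.2 ∈ A ∧ z.2 < z.1} :=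
    (measurable_snd hA).inter hslt
  have hs₂ : MeasurableSet {z : UnitInt × UnitInt | z.2 ∈ A ∧ z.1 < z.2} :=
    (measurable_snd hA).inter hsgt
  -- measurability of the various slice measures
  have hm1 : Measurable (fun x : UnitInt => μ (A ∩ Iio x)) := by
    have h := measurable_measure_prodMk_left (ν := μ) hs₁
    convert h using 2 with x
    rfl
  have hm2 : Measurable (fun x : UnitInt => μ (A ∩ Ioi x)) := by
    have h := measurable_measure_prodMk_left (ν := μ) hs₂
    convert h using 2 with x
    rfl
  have hm3 : Measurable (fun x : UnitInt => μ (Iio x)) := by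
    have h := measurable_measure_prodMk_left (ν := μ) hslt
    convert h using 2 with x
    rfl
  have hm4 : Measurable (fun x : UnitInt => μ (Ioi x)) := by
    have h := measurable_measure_prodMk_left (ν := μ) hsgt
    convert h using 2 with x
    rfl
  -- inner integral, Iio part
  have hIio_int : ∀ x : UnitInt, ∫⁻ y in Iio x, Pker p q x y A ∂μ
      = ENNReal.ofReal p * μ (A ∩ Iio x) + ENNReal.ofReal q * (χ x * μ (Iio x)) := by
    intro x
    have hcong : ∫⁻ y in Iio x, Pker p q x y A ∂μ
        = ∫⁻ y in Iio x, (ENNReal.ofReal p * χ y + ENNReal.ofReal q * χ x) ∂μ := by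
      apply setLIntegral_congr_fun_ae measurableSet_Iio
      apply Filter.Eventually.of_forall
      intro y hy
      have hyx : y < x := hy
      unfold Pker
      rw [if_neg (lt_asymm hyx), if_pos hyx]
      simp [Measure.dirac_apply' _ hA, hχdef]
    rw [hcong, lintegral_add_left (hχ.const_mul _), lintegral_const_mul _ hχ,
      lintegral_indicator_one hA, Measure.restrict_apply hA, setLIntegral_const]
    ring
  -- inner integral, Ioi part
  have hIoi_int : ∀ x : UnitInt, ∫⁻ y in Ioi x, Pker p q x y A ∂μ
      = ENNReal.ofReal p * (χ x * μ (Ioi x)) + ENNReal.ofReal q * μ (A ∩ Ioi x) := by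
    intro x
    have hcong : ∫⁻ y in Ioi x, Pker p q x y A ∂μ
        = ∫⁻ y in Ioi x, (ENNReal.ofReal p * χ x + ENNReal.ofReal q * χ y) ∂μ := by
      apply setLIntegral_congr_fun_ae measurableSet_Ioi
      apply Filter.Eventually.of_forall
      intro y hy
      have hxy : x < y := hy
      unfold Pker
      rw [if_pos hxy]
      simp [Measure.dirac_apply' _ hA, hχdef]
    rw [hcong, lintegral_add_left measurable_const, lintegral_const_mul _ hχ,
      lintegral_indicator_one hA, Measure.restrict_apply hA, setLIntegral_const]
    ring
  -- splitting the inner integral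
  have hinner : ∀ x : UnitInt, ∫⁻ y, Pker p q x y A ∂μ
      = (ENNReal.ofReal p * μ (A ∩ Iio x) + ENNReal.ofReal q * (χ x * μ (Iio x)))
        + (ENNReal.ofReal p * (χ x * μ (Ioi x)) + ENNReal.ofReal q * μ (A ∩ Ioi x)) := by
    intro x
    have hae : (Iio x ∪ Ioi x : Set UnitInt) =ᵐ[μ] univ := by
      rw [Set.Iio_union_Ioi, ae_eq_univ, compl_compl]
      exact measure_singleton x
    calc ∫⁻ y, Pker p q x y A ∂μ = ∫⁻ y in univ, Pker p q x y A ∂μ :=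
          (setLIntegral_univ _).symm
      _ = ∫⁻ y in Iio x ∪ Ioi x, Pker p q x y A ∂μ := by
          rw [Measure.restrict_congr_set hae]
      _ = _ := by
          rw [lintegral_union measurableSet_Ioi ((Set.Iic_disjoint_Ioi le_rfl).mono_left Set.Iio_subset_Iic_self),
            hIio_int x, hIoi_int x]
  -- swap lemmas
  have hswap1 : ∫⁻ x, μ (A ∩ Iio x) ∂μ = ∫⁻ x, χ x * μ (Ioi x) ∂μ := by
    have e1 : ∀ x : UnitInt, μ (A ∩ Iio x)
        = ∫⁻ y, ({z : UnitInt × UnitInt | z.2 ∈ A ∧ z.2 < z.1}.indicator (1 : UnitInt × UnitInt → ℝ≥0∞) (x, y)) ∂μ := by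
      intro x
      have : (fun y => ({z : UnitInt × UnitInt | z.2 ∈ A ∧ z.2 < z.1}.indicator (1 : UnitInt × UnitInt → ℝ≥0∞) (x, y)))
          = (A ∩ Iio x).indicator (1 : UnitInt → ℝ≥0∞) := by
        funext y
        by_cases hy : y ∈ A ∩ Iio x
        · have : (x, y) ∈ {z : UnitInt × UnitInt | z.2 ∈ A ∧ z.2 < z.1} := ⟨hy.1, hy.2⟩
          simp [indicator_of_mem this, indicator_of_mem hy]
        · have : (x, y) ∉ {z : UnitInt × UnitInt | z.2 ∈ A ∧ z.2 < z.1} := by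
            intro hc; exact hy ⟨hc.1, hc.2⟩
          simp [indicator_of_notMem this, indicator_of_notMem hy]
      rw [this]
      exact (lintegral_indicator_one (hA.inter measurableSet_Iio)).symm
    have hunc : AEMeasurable
        (Function.uncurry fun (x y : UnitInt) =>
          ({z : UnitInt × UnitInt | z.2 ∈ A ∧ z.2 < z.1}.indicator (1 : UnitInt × UnitInt → ℝ≥0∞) (x, y))) (μ.prod μ) := by
      have : (Function.uncurry fun (x y : UnitInt) =>
          ({z : UnitInt × UnitInt | z.2 ∈ A ∧ z.2 < z.1}.indicator (1 : UnitInt × UnitInt → ℝ≥0∞) (x, y)))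
          = {z : UnitInt × UnitInt | z.2 ∈ A ∧ z.2 < z.1}.indicator (1 : UnitInt × UnitInt → ℝ≥0∞) := rfl
      rw [this]
      exact (measurable_one.indicator hs₁).aemeasurable
    calc ∫⁻ x, μ (A ∩ Iio x) ∂μ
        = ∫⁻ x, ∫⁻ y, ({z : UnitInt × UnitInt | z.2 ∈ A ∧ z.2 < z.1}.indicator (1 : UnitInt × UnitInt → ℝ≥0∞) (x, y)) ∂μ ∂μ :=
          lintegral_congr e1
      _ = ∫⁻ y, ∫⁻ x, ({z : UnitInt × UnitInt | z.2 ∈ A ∧ z.2 < z.1}.indicator (1 : UnitInt × UnitInt → ℝ≥0∞) (x, y)) ∂μ ∂μ :=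
          lintegral_lintegral_swap hunc
      _ = ∫⁻ y, χ y * μ (Ioi y) ∂μ := by
          apply lintegral_congr
          intro y
          by_cases hy : y ∈ A
          · have : (fun x => ({z : UnitInt × UnitInt | z.2 ∈ A ∧ z.2 < z.1}.indicator (1 : UnitInt × UnitInt → ℝ≥0∞) (x, y)))
                = (Ioi y).indicator (1 : UnitInt → ℝ≥0∞) := by
              funext x
              by_cases hx : y < x
              · have h1 : (x, y) ∈ {z : UnitInt × UnitInt | z.2 ∈ A ∧ z.2 < z.1} := ⟨hy, hx⟩
                simp [indicator_of_mem h1, indicator_of_mem (mem_Ioi.2 hx)]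
              · have h1 : (x, y) ∉ {z : UnitInt × UnitInt | z.2 ∈ A ∧ z.2 < z.1} := by
                  intro hc; exact hx hc.2
                simp [indicator_of_notMem h1, indicator_of_notMem (fun hc => hx (mem_Ioi.1 hc))]
            rw [this, lintegral_indicator_one measurableSet_Ioi, hχdef,
              indicator_of_mem hy, Pi.one_apply, one_mul]
          · have : (fun x => ({z : UnitInt × UnitInt | z.2 ∈ A ∧ z.2 < z.1}.indicator (1 : UnitInt × UnitInt → ℝ≥0∞) (x, y)))
                = fun _ => (0:ℝ≥0∞) := by
              funext x
              have h1 : (x, y) ∉ {z : UnitInt × UnitInt | z.2 ∈ A ∧ z.2 < z.1} := by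
                intro hc; exact hy hc.1
              simp [indicator_of_notMem h1]
            rw [this, lintegral_zero, hχdef, indicator_of_notMem hy, zero_mul]
  have hswap2 : ∫⁻ x, μ (A ∩ Ioi x) ∂μ = ∫⁻ x, χ x * μ (Iio x) ∂μ := by
    have e1 : ∀ x : UnitInt, μ (A ∩ Ioi x)
        = ∫⁻ y, ({z : UnitInt × UnitInt | z.2 ∈ A ∧ z.1 < z.2}.indicator (1 : UnitInt × UnitInt → ℝ≥0∞) (x, y)) ∂μ := by
      intro x
      have : (fun y => ({z : UnitInt × UnitInt | z.2 ∈ A ∧ z.1 < z.2}.indicator (1 : UnitInt × UnitInt → ℝ≥0∞) (x, y)))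
          = (A ∩ Ioi x).indicator (1 : UnitInt → ℝ≥0∞) := by
        funext y
        by_cases hy : y ∈ A ∩ Ioi x
        · have : (x, y) ∈ {z : UnitInt × UnitInt | z.2 ∈ A ∧ z.1 < z.2} := ⟨hy.1, hy.2⟩
          simp [indicator_of_mem this, indicator_of_mem hy]
        · have : (x, y) ∉ {z : UnitInt × UnitInt | z.2 ∈ A ∧ z.1 < z.2} := by
            intro hc; exact hy ⟨hc.1, hc.2⟩
          simp [indicator_of_notMem this, indicator_of_notMem hy]
      rw [this]
      exact (lintegral_indicator_one (hA.inter measurableSet_Ioi)).symm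
    have hunc : AEMeasurable
        (Function.uncurry fun (x y : UnitInt) =>
          ({z : UnitInt × UnitInt | z.2 ∈ A ∧ z.1 < z.2}.indicator (1 : UnitInt × UnitInt → ℝ≥0∞) (x, y))) (μ.prod μ) := by
      have : (Function.uncurry fun (x y : UnitInt) =>
          ({z : UnitInt × UnitInt | z.2 ∈ A ∧ z.1 < z.2}.indicator (1 : UnitInt × UnitInt → ℝ≥0∞) (x, y)))
          = {z : UnitInt × UnitInt | z.2 ∈ A ∧ z.1 < z.2}.indicator (1 : UnitInt × UnitInt → ℝ≥0∞) := rfl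
      rw [this]
      exact (measurable_one.indicator hs₂).aemeasurable
    calc ∫⁻ x, μ (A ∩ Ioi x) ∂μ
        = ∫⁻ x, ∫⁻ y, ({z : UnitInt × UnitInt | z.2 ∈ A ∧ z.1 < z.2}.indicator (1 : UnitInt × UnitInt → ℝ≥0∞) (x, y)) ∂μ ∂μ :=
          lintegral_congr e1
      _ = ∫⁻ y, ∫⁻ x, ({z : UnitInt × UnitInt | z.2 ∈ A ∧ z.1 < z.2}.indicator (1 : UnitInt × UnitInt → ℝ≥0∞) (x, y)) ∂μ ∂μ :=
          lintegral_lintegral_swap hunc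
      _ = ∫⁻ y, χ y * μ (Iio y) ∂μ := by
          apply lintegral_congr
          intro y
          by_cases hy : y ∈ A
          · have : (fun x => ({z : UnitInt × UnitInt | z.2 ∈ A ∧ z.1 < z.2}.indicator (1 : UnitInt × UnitInt → ℝ≥0∞) (x, y)))
                = (Iio y).indicator (1 : UnitInt → ℝ≥0∞) := by
              funext x
              by_cases hx : x < y
              · have h1 : (x, y) ∈ {z : UnitInt × UnitInt | z.2 ∈ A ∧ z.1 < z.2} := ⟨hy, hx⟩
                simp [indicator_of_mem h1, indicator_of_mem (mem_Iio.2 hx)]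
              · have h1 : (x, y) ∉ {z : UnitInt × UnitInt | z.2 ∈ A ∧ z.1 < z.2} := by
                  intro hc; exact hx hc.2
                simp [indicator_of_notMem h1, indicator_of_notMem (fun hc => hx (mem_Iio.1 hc))]
            rw [this, lintegral_indicator_one measurableSet_Iio, hχdef,
              indicator_of_mem hy, Pi.one_apply, one_mul]
          · have : (fun x => ({z : UnitInt × UnitInt | z.2 ∈ A ∧ z.1 < z.2}.indicator (1 : UnitInt × UnitInt → ℝ≥0∞) (x, y)))
                = fun _ => (0:ℝ≥0∞) := by
              funext x
              have h1 : (x, y) ∉ {z : UnitInt × UnitInt | z.2 ∈ A ∧ z.1 < z.2} := by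
                intro hc; exact hy hc.1
              simp [indicator_of_notMem h1]
            rw [this, lintegral_zero, hχdef, indicator_of_notMem hy, zero_mul]
  -- putting it together
  have hsplit : ∫⁻ x, ∫⁻ y, Pker p q x y A ∂μ ∂μ
      = ENNReal.ofReal p * ∫⁻ x, μ (A ∩ Iio x) ∂μ
        + ENNReal.ofReal q * ∫⁻ x, χ x * μ (Iio x) ∂μ
        + (ENNReal.ofReal p * ∫⁻ x, χ x * μ (Ioi x) ∂μ
        + ENNReal.ofReal q * ∫⁻ x, μ (A ∩ Ioi x) ∂μ) := by
    rw [lintegral_congr hinner]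
    rw [lintegral_add_left (((hm1.const_mul _).fun_add ((hχ.fun_mul hm3).const_mul _)))]
    rw [lintegral_add_left (hm1.const_mul _)]
    rw [lintegral_add_left ((hχ.fun_mul hm4).const_mul _)]
    rw [lintegral_const_mul _ hm1, lintegral_const_mul _ (hχ.fun_mul hm3),
      lintegral_const_mul _ (hχ.fun_mul hm4), lintegral_const_mul _ hm2]
  rw [hsplit, hswap1, hswap2]
  have hfinal : ∫⁻ x in A, (2 * ENNReal.ofReal p * μ (Ioi x) + 2 * ENNReal.ofReal q * μ (Iio x)) ∂μ
      = 2 * ENNReal.ofReal p * ∫⁻ x, χ x * μ (Ioi x) ∂μ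
        + 2 * ENNReal.ofReal q * ∫⁻ x, χ x * μ (Iio x) ∂μ := by
    have hind : (fun x => A.indicator
        (fun x => 2 * ENNReal.ofReal p * μ (Ioi x) + 2 * ENNReal.ofReal q * μ (Iio x)) x)
        = fun x => 2 * ENNReal.ofReal p * (χ x * μ (Ioi x))
          + 2 * ENNReal.ofReal q * (χ x * μ (Iio x)) := by
      funext x
      by_cases hx : x ∈ A
      · simp [indicator_of_mem hx, hχdef, mul_assoc]
      · simp [indicator_of_notMem hx, hχdef]
    rw [← lintegral_indicator hA, hind,
      lintegral_add_left ((hχ.fun_mul hm4).const_mul _),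
      lintegral_const_mul _ (hχ.fun_mul hm4), lintegral_const_mul _ (hχ.fun_mul hm3)]
  rw [hfinal]
  ring


theorem iterate_density_formula (p q : ℝ) (hp : 0 ≤ p) (hq : 0 ≤ q) (hpq : p + q = 1)
    (V : Measure UnitInt → Measure UnitInt)
    (hV : ∀ (μ : Measure UnitInt) (A : Set UnitInt), MeasurableSet A →
      V μ A = ∫⁻ x, ∫⁻ y, Pker p q x y A ∂μ ∂μ)
    (lam : Measure UnitInt) [IsProbabilityMeasure lam] [NullSingletonClass lam]
    (n : ℕ) (hn : 1 ≤ n) :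
    ∀ A : Set UnitInt, MeasurableSet A →
      V^[n] lam A = ∫⁻ x in A,
        ENNReal.ofReal
          (∏ i ∈ Finset.range n, hFun p q ((Gp p)^[i] ((lam (Set.Iic x)).toReal))) ∂lam := by
  clear hn
  have hp1 : p ≤ 1 := by linarith
  induction n with
  | zero =>
      intro A hA
      simp only [Function.iterate_zero, id_eq, Finset.prod_range_zero, ENNReal.ofReal_one]
      rw [setLIntegral_one]
  | succ k ih =>
      intro A hA
      set μ : Measure UnitInt := V^[k] lam with hμdef
      have hfmeas : Measurable (fun x : UnitInt => ENNReal.ofReal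
          (∏ i ∈ Finset.range k, hFun p q ((Gp p)^[i] ((lam (Iic x)).toReal)))) :=
        ENNReal.measurable_ofReal.comp ((Fk_continuous p q k).measurable.comp (g_measurable lam))
      have hmueq : μ = lam.withDensity (fun x => ENNReal.ofReal
          (∏ i ∈ Finset.range k, hFun p q ((Gp p)^[i] ((lam (Iic x)).toReal)))) := by
        ext B hB
        rw [withDensity_apply _ hB]
        exact ih B hB
      have hmuIic : ∀ x : UnitInt,
          μ (Iic x) = ENNReal.ofReal ((Gp p)^[k] ((lam (Iic x)).toReal)) := by
        intro x
        rw [hμdef, ih (Iic x) measurableSet_Iic,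
          transfer lam _ (Fk_continuous p q k)
            (fun u hu => Fk_nonneg p q hp hq hpq k hu) x,
          integral_Fk p q hpq k]
      have huniv : (univ : Set UnitInt) = Iic (⟨1, by norm_num⟩ : UnitInt) := by
        ext y
        simp only [mem_univ, mem_Iic, true_iff]
        exact Subtype.coe_le_coe.1 y.2.2
      have hμuniv : μ univ = 1 := by
        rw [huniv, hmuIic]
        have h1 : lam (Iic (⟨1, by norm_num⟩ : UnitInt)) = 1 := by
          rw [← huniv]; exact measure_univ
        rw [h1]
        simp [Gp_iterate_one]
      haveI hfin : IsFiniteMeasure μ := ⟨by rw [hμuniv]; exact one_lt_top⟩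
      haveI hnoat : NullSingletonClass μ := by
        constructor
        intro x
        rw [hmueq, withDensity_apply _ (measurableSet_singleton x)]
        exact setLIntegral_measure_zero _ _ (measure_singleton x)
      have hmuIio : ∀ x : UnitInt,
          μ (Iio x) = ENNReal.ofReal ((Gp p)^[k] ((lam (Iic x)).toReal)) := fun x =>
        (measure_congr Iio_ae_eq_Iic).trans (hmuIic x)
      have hGmem : ∀ x : UnitInt, (Gp p)^[k] ((lam (Iic x)).toReal) ∈ Icc (0:ℝ) 1 :=
        fun x => Gp_iterate_mem p hp hp1 k (g_mem lam x)
      have hmuIoi : ∀ x : UnitInt,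
          μ (Ioi x) = ENNReal.ofReal (1 - (Gp p)^[k] ((lam (Iic x)).toReal)) := by
        intro x
        rw [← Set.compl_Iic, measure_compl measurableSet_Iic (measure_ne_top μ _), hμuniv,
          hmuIic x, ENNReal.ofReal_sub _ (hGmem x).1, ENNReal.ofReal_one]
      rw [Function.iterate_succ_apply', ← hμdef, hV μ A hA, Vstep p q μ hA]
      have hpt : ∀ x : UnitInt,
          2 * ENNReal.ofReal p * μ (Ioi x) + 2 * ENNReal.ofReal q * μ (Iio x)
            = ENNReal.ofReal (hFun p q ((Gp p)^[k] ((lam (Iic x)).toReal))) := by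
        intro x
        rw [hmuIoi x, hmuIio x]
        have ht := hGmem x
        rw [show hFun p q ((Gp p)^[k] ((lam (Iic x)).toReal))
            = 2*q*((Gp p)^[k] ((lam (Iic x)).toReal))
              + 2*p*(1 - (Gp p)^[k] ((lam (Iic x)).toReal)) from rfl]
        rw [ENNReal.ofReal_add (by nlinarith [ht.1] : (0:ℝ) ≤ _) (by nlinarith [ht.2] : (0:ℝ) ≤ _)]
        rw [ENNReal.ofReal_mul (by linarith : (0:ℝ) ≤ 2*q),
          ENNReal.ofReal_mul (by linarith : (0:ℝ) ≤ 2*p),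
          ENNReal.ofReal_mul (by norm_num : (0:ℝ) ≤ 2),
          ENNReal.ofReal_mul (by norm_num : (0:ℝ) ≤ 2),
          ENNReal.ofReal_ofNat]
        ring
      rw [setLIntegral_congr_fun_ae hA (Filter.Eventually.of_forall (fun x _ => hpt x))]
      have hhmeas : Measurable (fun x : UnitInt =>
          ENNReal.ofReal (hFun p q ((Gp p)^[k] ((lam (Iic x)).toReal)))) :=
        ENNReal.measurable_ofReal.comp (((hFun_continuous p q).comp
          ((Gp_continuous p).iterate k)).measurable.comp (g_measurable lam))
      rw [hmueq, setLIntegral_withDensity_eq_setLIntegral_mul lam hfmeas hhmeas hA]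
      apply setLIntegral_congr_fun_ae hA
      apply Filter.Eventually.of_forall
      intro x _
      show ENNReal.ofReal (∏ i ∈ Finset.range k, hFun p q ((Gp p)^[i] ((lam (Iic x)).toReal)))
          * ENNReal.ofReal (hFun p q ((Gp p)^[k] ((lam (Iic x)).toReal))) = _
      rw [← ENNReal.ofReal_mul (Fk_nonneg p q hp hq hpq k (g_mem lam x)),
        Finset.prod_range_succ]
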